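/- Let X̄ be a compact metric space of finite covering dimension, and let X = X̄^{ℤ^k} with the shift action of ℤ^k and the product distance d(x,y) = ∑_{a∈ℤ^k} 2^{−|a|} d(x_a, y_a), where |a| = |a₁|+⋯+|a_k|. Then the mean dimension satisfies dim(X : ℤ^k) ≤ dim X̄. -/

import Mathlib

open Set Filter

noncomputable section

/-- `P ⊆ ℝ^m` is a finite polyhedron of dimension at most `n`: a finite union of
convex hulls of finite sets of at most `n+1` points. -/
def IsPolyhedron {m : ℕ} (P : Set (EuclideanSpace ℝ (Fin m))) (n : ℕ) : Prop :=
  ∃ S : Finset (Finset (EuclideanSpace ℝ (Fin m))),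
    (∀ s ∈ S, s.card ≤ n + 1) ∧ P = ⋃ s ∈ S, convexHull ℝ (↑s : Set (EuclideanSpace ℝ (Fin m)))

/-- `WidimLE X d ε n`: there is a continuous `ε`-embedding (w.r.t. the distance
function `d`) of `X` into a finite polyhedron of dimension at most `n`. -/
def WidimLE (X : Type*) [TopologicalSpace X] (d : X → X → ℝ) (ε : ℝ) (n : ℕ) : Prop :=
  ∃ (m : ℕ) (P : Set (EuclideanSpace ℝ (Fin m))) (f : X → EuclideanSpace ℝ (Fin m)),
    IsPolyhedron P n ∧ Continuous f ∧ Set.range f ⊆ P ∧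
    ∀ x y : X, f x = f y → d x y ≤ ε

/-- Minimal dimension of a finite polyhedron admitting an `ε`-embedding of `X`. -/
def Widim (X : Type*) [TopologicalSpace X] (d : X → X → ℝ) (ε : ℝ) : ℕ :=
  sInf {n | WidimLE X d ε n}

/-- The distance `d_{I_n}(x,y) = max_{γ ∈ [0,n)^k ∩ ℤ^k} d(γ.x, γ.y)` associated to a
`ℤ^k`-action `T`. -/
def dBoxZ {X : Type*} (k : ℕ) (T : (Fin k → ℤ) → X → X) (d : X → X → ℝ)
    (n : ℕ) (x y : X) : ℝ :=
  sSup {r | ∃ γ : Fin k → ℤ, (∀ i, 0 ≤ γ i ∧ γ i < (n : ℤ)) ∧ r = d (T γ x) (T γ y)}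

/-- The mean dimension `dim(X : ℤ^k) = lim_{ε→0} lim_{n→∞} n^{-k} Widim_ε(X, d_{I_n})`
of a `ℤ^k`-action `T` on `X` (with distance function `d`), as a value in `ℝ≥0∞`. -/
def mdimZ {X : Type*} [TopologicalSpace X] (k : ℕ) (T : (Fin k → ℤ) → X → X)
    (d : X → X → ℝ) : ENNReal :=
  ⨆ (ε : ℝ) (_ : 0 < ε),
    Filter.limsup (fun n : ℕ =>
      (Widim X (dBoxZ k T d n) ε : ENNReal) / (n : ENNReal) ^ k) Filter.atTop

/-- Covering dimension `≤ n`: every open cover admits an open refinement in which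
every point lies in at most `n+1` members. -/
def CovdimLE (X : Type*) [TopologicalSpace X] (n : ℕ) : Prop :=
  ∀ 𝒰 : Set (Set X), (∀ U ∈ 𝒰, IsOpen U) → ⋃₀ 𝒰 = Set.univ →
    ∃ 𝒱 : Set (Set X), (∀ V ∈ 𝒱, IsOpen V) ∧ ⋃₀ 𝒱 = Set.univ ∧
      (∀ V ∈ 𝒱, ∃ U ∈ 𝒰, V ⊆ U) ∧
      ∀ (x : X) (S : Finset (Set X)), (↑S : Set (Set X)) ⊆ 𝒱 → (∀ V ∈ S, x ∈ V) →
        S.card ≤ n + 1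

/-- The product distance `d(x,y) = ∑_{a ∈ ℤ^k} 2^{-|a|} d(x_a, y_a)` on `X̄^{ℤ^k}`. -/
def prodDist {k : ℕ} {Xb : Type*} [PseudoMetricSpace Xb]
    (x y : (Fin k → ℤ) → Xb) : ℝ :=
  ∑' a : Fin k → ℤ, ((2 : ℝ) ^ (∑ i, (a i).natAbs))⁻¹ * dist (x a) (y a)

/-- The shift action of `ℤ^k` on `X̄^{ℤ^k}`. -/
def shiftZ {k : ℕ} {Xb : Type*} (γ : Fin k → ℤ) (x : (Fin k → ℤ) → Xb) :
    (Fin k → ℤ) → Xb :=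
  fun a => x (γ + a)

end

noncomputable section AuxPoly

variable {E F : Type*} [AddCommGroup E] [Module ℝ E] [AddCommGroup F] [Module ℝ F]

/-- Abstract version of `IsPolyhedron` in any real module. -/
def IsPolyIn (P : Set E) (n : ℕ) : Prop :=
  ∃ S : Finset (Finset E),
    (∀ s ∈ S, s.card ≤ n + 1) ∧ P = ⋃ s ∈ S, convexHull ℝ (↑s : Set E)

private lemma clamp_step {a b s t : ℝ} (hab : b ≤ a) (hst : s ≤ t) :
    max 0 (min a t - max b s) = min a (max b t) - min a (max b s) := by
  simp only [max_def, min_def]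
  split_ifs <;> linarith

lemma exists_coupling (p q : ℕ) (lam : Fin p → ℝ) (mu : Fin q → ℝ)
    (hl0 : ∀ i, 0 ≤ lam i) (hm0 : ∀ j, 0 ≤ mu j)
    (hl1 : ∑ i, lam i = 1) (hm1 : ∑ j, mu j = 1) :
    ∃ nu : Fin p → Fin q → ℝ, (∀ i j, 0 ≤ nu i j) ∧
      (∀ i, ∑ j, nu i j = lam i) ∧ (∀ j, ∑ i, nu i j = mu j) ∧
      (Finset.univ.filter (fun ij : Fin p × Fin q => nu ij.1 ij.2 ≠ 0)).card ≤ p + q - 1 := by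
  classical
  have hp : 0 < p := by
    rcases Nat.eq_zero_or_pos p with h | h
    · subst h; simp at hl1
    · exact h
  have hq : 0 < q := by
    rcases Nat.eq_zero_or_pos q with h | h
    · subst h; simp at hm1
    · exact h
  set lamN : ℕ → ℝ := fun i => if h : i < p then lam ⟨i, h⟩ else 0 with hlamN
  set muN : ℕ → ℝ := fun j => if h : j < q then mu ⟨j, h⟩ else 0 with hmuN
  have hlamN0 : ∀ i, 0 ≤ lamN i := by
    intro i; simp only [hlamN]; split_ifs; exacts [hl0 _, le_rfl]
  have hmuN0 : ∀ j, 0 ≤ muN j := by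
    intro j; simp only [hmuN]; split_ifs; exacts [hm0 _, le_rfl]
  set L : ℕ → ℝ := fun i => ∑ t ∈ Finset.range i, lamN t with hLdef
  set M : ℕ → ℝ := fun j => ∑ t ∈ Finset.range j, muN t with hMdef
  have hLmono : Monotone L := fun i i' h =>
    Finset.sum_le_sum_of_subset_of_nonneg (Finset.range_subset_range.2 h) (fun t _ _ => hlamN0 t)
  have hMmono : Monotone M := fun j j' h =>
    Finset.sum_le_sum_of_subset_of_nonneg (Finset.range_subset_range.2 h) (fun t _ _ => hmuN0 t)
  have hL0 : L 0 = 0 := by simp [hLdef]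
  have hM0 : M 0 = 0 := by simp [hMdef]
  have hLnonneg : ∀ i, 0 ≤ L i := fun i => hL0 ▸ hLmono (Nat.zero_le i)
  have hMnonneg : ∀ j, 0 ≤ M j := fun j => hM0 ▸ hMmono (Nat.zero_le j)
  have hLfin : L p = 1 := by
    have : L p = ∑ i : Fin p, lam i := by
      simp only [hLdef]
      rw [← Fin.sum_univ_eq_sum_range lamN p]
      exact Finset.sum_congr rfl fun i _ => by simp [hlamN, i.isLt]
    rw [this, hl1]
  have hMfin : M q = 1 := by
    have : M q = ∑ j : Fin q, mu j := by
      simp only [hMdef]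
      rw [← Fin.sum_univ_eq_sum_range muN q]
      exact Finset.sum_congr rfl fun j _ => by simp [hmuN, j.isLt]
    rw [this, hm1]
  have hLp : ∀ i, p ≤ i → L i = 1 := by
    intro i hi
    have h : L i = L p := by
      refine (Finset.sum_subset (Finset.range_subset_range.2 hi) ?_).symm
      intro t _ ht
      simp only [Finset.mem_range, not_lt] at ht
      simp only [hlamN]
      rw [dif_neg (by omega)]
    rw [h, hLfin]
  have hMq : ∀ j, q ≤ j → M j = 1 := by
    intro j hj
    have h : M j = M q := by
      refine (Finset.sum_subset (Finset.range_subset_range.2 hj) ?_).symm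
      intro t _ ht
      simp only [Finset.mem_range, not_lt] at ht
      simp only [hmuN]
      rw [dif_neg (by omega)]
    rw [h, hMfin]
  have hLle1 : ∀ i, L i ≤ 1 := fun i => by
    calc L i ≤ L (i + p) := hLmono (by omega)
    _ = 1 := hLp _ (by omega)
  have hMle1 : ∀ j, M j ≤ 1 := fun j => by
    calc M j ≤ M (j + q) := hMmono (by omega)
    _ = 1 := hMq _ (by omega)
  have hLstep : ∀ i : Fin p, L (i.1 + 1) - L i.1 = lam i := by
    intro i
    simp only [hLdef, Finset.sum_range_succ, add_sub_cancel_left]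
    simp [hlamN, i.isLt]
  have hMstep : ∀ j : Fin q, M (j.1 + 1) - M j.1 = mu j := by
    intro j
    simp only [hMdef, Finset.sum_range_succ, add_sub_cancel_left]
    simp [hmuN, j.isLt]
  refine ⟨fun i j => max 0 (min (L (i.1 + 1)) (M (j.1 + 1)) - max (L i.1) (M j.1)),
    fun i j => le_max_left _ _, ?_, ?_, ?_⟩
  · -- row sums
    intro i
    have h1 : ∀ j : Fin q,
        max 0 (min (L (i.1 + 1)) (M (j.1 + 1)) - max (L i.1) (M j.1)) =
        min (L (i.1 + 1)) (max (L i.1) (M (j.1 + 1))) -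
          min (L (i.1 + 1)) (max (L i.1) (M j.1)) :=
      fun j => clamp_step (hLmono (Nat.le_succ _)) (hMmono (Nat.le_succ _))
    calc ∑ j : Fin q, max 0 (min (L (i.1 + 1)) (M (j.1 + 1)) - max (L i.1) (M j.1))
        = ∑ j ∈ Finset.range q, (min (L (i.1 + 1)) (max (L i.1) (M (j + 1)))
            - min (L (i.1 + 1)) (max (L i.1) (M j))) := by
          rw [← Fin.sum_univ_eq_sum_range (fun j => min (L (i.1 + 1)) (max (L i.1) (M (j + 1)))
            - min (L (i.1 + 1)) (max (L i.1) (M j))) q]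
          exact Finset.sum_congr rfl (fun j _ => h1 j)
      _ = min (L (i.1 + 1)) (max (L i.1) (M q)) - min (L (i.1 + 1)) (max (L i.1) (M 0)) :=
          Finset.sum_range_sub (fun j => min (L (i.1 + 1)) (max (L i.1) (M j))) q
      _ = lam i := by
          rw [hM0, hMfin, max_eq_right (hLle1 i.1), max_eq_left (hLnonneg i.1),
            min_eq_left (hLle1 _), min_eq_right (hLmono (Nat.le_succ _))]
          exact hLstep i
  · -- column sums
    intro j
    have h1 : ∀ i : Fin p,
        max 0 (min (L (i.1 + 1)) (M (j.1 + 1)) - max (L i.1) (M j.1)) =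
        min (M (j.1 + 1)) (max (M j.1) (L (i.1 + 1))) -
          min (M (j.1 + 1)) (max (M j.1) (L i.1)) := by
      intro i
      rw [min_comm (L (i.1 + 1)) (M (j.1 + 1)), max_comm (L i.1) (M j.1)]
      exact clamp_step (hMmono (Nat.le_succ _)) (hLmono (Nat.le_succ _))
    calc ∑ i : Fin p, max 0 (min (L (i.1 + 1)) (M (j.1 + 1)) - max (L i.1) (M j.1))
        = ∑ i ∈ Finset.range p, (min (M (j.1 + 1)) (max (M j.1) (L (i + 1)))
            - min (M (j.1 + 1)) (max (M j.1) (L i))) := by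
          rw [← Fin.sum_univ_eq_sum_range (fun i => min (M (j.1 + 1)) (max (M j.1) (L (i + 1)))
            - min (M (j.1 + 1)) (max (M j.1) (L i))) p]
          exact Finset.sum_congr rfl (fun i _ => h1 i)
      _ = min (M (j.1 + 1)) (max (M j.1) (L p)) - min (M (j.1 + 1)) (max (M j.1) (L 0)) :=
          Finset.sum_range_sub (fun i => min (M (j.1 + 1)) (max (M j.1) (L i))) p
      _ = mu j := by
          rw [hL0, hLfin, max_eq_right (hMle1 j.1), max_eq_left (hMnonneg j.1),
            min_eq_left (hMle1 _), min_eq_right (hMmono (Nat.le_succ _))]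
          exact hMstep j
  · -- support bound
    have hmemS : ∀ ij : Fin p × Fin q,
        ij ∈ Finset.univ.filter (fun ij : Fin p × Fin q =>
          max 0 (min (L (ij.1.1 + 1)) (M (ij.2.1 + 1)) - max (L ij.1.1) (M ij.2.1)) ≠ 0) →
        max (L ij.1.1) (M ij.2.1) < min (L (ij.1.1 + 1)) (M (ij.2.1 + 1)) := by
      intro ij hij
      rw [Finset.mem_filter] at hij
      by_contra h
      push_neg at h
      exact hij.2 (max_eq_left (sub_nonpos.2 h))
    have hinjaux : ∀ ij, ∀ hij : ij ∈ Finset.univ.filter (fun ij : Fin p × Fin q =>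
          max 0 (min (L (ij.1.1 + 1)) (M (ij.2.1 + 1)) - max (L ij.1.1) (M ij.2.1)) ≠ 0),
        ∀ ij', ∀ hij' : ij' ∈ Finset.univ.filter (fun ij : Fin p × Fin q =>
          max 0 (min (L (ij.1.1 + 1)) (M (ij.2.1 + 1)) - max (L ij.1.1) (M ij.2.1)) ≠ 0),
        max (L ij.1.1) (M ij.2.1) = max (L ij'.1.1) (M ij'.2.1) → ij.1.1 < ij'.1.1 → False := by
      intro ij hij ij' hij' heq hlt
      have h1 : max (L ij.1.1) (M ij.2.1) < L (ij.1.1 + 1) :=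
        lt_of_lt_of_le (hmemS ij hij) (min_le_left _ _)
      have h2 : L (ij.1.1 + 1) ≤ L ij'.1.1 := hLmono (by omega)
      have h3 : L ij'.1.1 ≤ max (L ij'.1.1) (M ij'.2.1) := le_max_left _ _
      rw [heq] at h1
      linarith
    have hinjauxM : ∀ ij, ∀ hij : ij ∈ Finset.univ.filter (fun ij : Fin p × Fin q =>
          max 0 (min (L (ij.1.1 + 1)) (M (ij.2.1 + 1)) - max (L ij.1.1) (M ij.2.1)) ≠ 0),
        ∀ ij', ∀ hij' : ij' ∈ Finset.univ.filter (fun ij : Fin p × Fin q =>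
          max 0 (min (L (ij.1.1 + 1)) (M (ij.2.1 + 1)) - max (L ij.1.1) (M ij.2.1)) ≠ 0),
        max (L ij.1.1) (M ij.2.1) = max (L ij'.1.1) (M ij'.2.1) → ij.2.1 < ij'.2.1 → False := by
      intro ij hij ij' hij' heq hlt
      have h1 : max (L ij.1.1) (M ij.2.1) < M (ij.2.1 + 1) :=
        lt_of_lt_of_le (hmemS ij hij) (min_le_right _ _)
      have h2 : M (ij.2.1 + 1) ≤ M ij'.2.1 := hMmono (by omega)
      have h3 : M ij'.2.1 ≤ max (L ij'.1.1) (M ij'.2.1) := le_max_right _ _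
      rw [heq] at h1
      linarith
    calc (Finset.univ.filter (fun ij : Fin p × Fin q =>
          max 0 (min (L (ij.1.1 + 1)) (M (ij.2.1 + 1)) - max (L ij.1.1) (M ij.2.1)) ≠ 0)).card
        ≤ (((Finset.range p).image (fun i => L i)) ∪
            ((Finset.Ico 1 q).image (fun j => M j))).card := by
          refine Finset.card_le_card_of_injOn
            (fun ij => max (L ij.1.1) (M ij.2.1)) ?_ ?_
          · intro ij hij
            dsimp only
            rcases max_choice (L ij.1.1) (M ij.2.1) with h | h
            · rw [h]
              exact Finset.mem_union_left _
                (Finset.mem_image_of_mem _ (Finset.mem_range.2 ij.1.isLt))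
            · rw [h]
              rcases Nat.eq_zero_or_pos ij.2.1 with h0 | h0
              · rw [h0, hM0, ← hL0]
                exact Finset.mem_union_left _
                  (Finset.mem_image_of_mem _ (Finset.mem_range.2 hp))
              · exact Finset.mem_union_right _
                  (Finset.mem_image_of_mem _ (Finset.mem_Ico.2 ⟨h0, ij.2.isLt⟩))
          · intro ij hij ij' hij' heq
            simp only at heq
            rw [Finset.mem_coe] at hij hij'
            have hi : ij.1.1 = ij'.1.1 := by
              rcases lt_trichotomy ij.1.1 ij'.1.1 with h | h | h
              · exact (hinjaux ij hij ij' hij' heq h).elim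
              · exact h
              · exact (hinjaux ij' hij' ij hij heq.symm h).elim
            have hj : ij.2.1 = ij'.2.1 := by
              rcases lt_trichotomy ij.2.1 ij'.2.1 with h | h | h
              · exact (hinjauxM ij hij ij' hij' heq h).elim
              · exact h
              · exact (hinjauxM ij' hij' ij hij heq.symm h).elim
            exact Prod.ext (Fin.ext hi) (Fin.ext hj)
      _ ≤ ((Finset.range p).image (fun i => L i)).card +
            ((Finset.Ico 1 q).image (fun j => M j)).card := Finset.card_union_le _ _
      _ ≤ p + (q - 1) := by
          refine add_le_add (le_trans Finset.card_image_le ?_)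
            (le_trans Finset.card_image_le ?_)
          · simp
          · simp [Nat.card_Ico]
      _ ≤ p + q - 1 := by omega

lemma IsPolyIn.prodSet {P : Set E} {Q : Set F} {a b : ℕ}
    (hP : IsPolyIn P a) (hQ : IsPolyIn Q b) : IsPolyIn (P ×ˢ Q) (a + b) := by
  classical
  obtain ⟨S, hScard, rfl⟩ := hP
  obtain ⟨T, hTcard, rfl⟩ := hQ
  refine ⟨(S ×ˢ T).biUnion (fun st =>
    (st.1 ×ˢ st.2).powerset.filter fun W : Finset (E × F) => W.card ≤ a + b + 1), ?_, ?_⟩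
  · intro W hW
    simp only [Finset.mem_biUnion, Finset.mem_filter, Finset.mem_powerset] at hW
    obtain ⟨st, _, _, hcard⟩ := hW
    exact hcard
  · apply Set.Subset.antisymm
    · rintro ⟨x, y⟩ ⟨hx, hy⟩
      simp only [Set.mem_iUnion] at hx hy
      obtain ⟨s, hs, hxs⟩ := hx
      obtain ⟨t, ht, hyt⟩ := hy
      rw [Finset.mem_convexHull'] at hxs hyt
      obtain ⟨w, hw0, hw1, hwx⟩ := hxs
      obtain ⟨v, hv0, hv1, hvy⟩ := hyt
      set p := s.card with hpdef
      set q := t.card with hqdef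
      set eS : {x // x ∈ s} ≃ Fin p := s.equivFin with heS
      set eT : {y // y ∈ t} ≃ Fin q := t.equivFin with heT
      set u : Fin p → E := fun i => (eS.symm i : E) with hu
      set z : Fin q → F := fun j => (eT.symm j : F) with hz
      set lam : Fin p → ℝ := fun i => w (u i) with hlam
      set mu : Fin q → ℝ := fun j => v (z j) with hmu
      have hsum_lam : ∀ (g : E → ℝ), ∑ i, g (u i) = ∑ y ∈ s, g y := by
        intro g
        rw [← Finset.sum_coe_sort s g]
        exact Fintype.sum_equiv eS.symm _ _ (fun i => rfl)
      have hsum_mu : ∀ (g : F → ℝ), ∑ j, g (z j) = ∑ y ∈ t, g y := by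
        intro g
        rw [← Finset.sum_coe_sort t g]
        exact Fintype.sum_equiv eT.symm _ _ (fun j => rfl)
      have hsum_lamE : ∑ i, w (u i) • u i = ∑ y ∈ s, w y • y := by
        rw [← Finset.sum_coe_sort s (fun y => w y • y)]
        exact Fintype.sum_equiv eS.symm _ _ (fun i => rfl)
      have hsum_muF : ∑ j, v (z j) • z j = ∑ y ∈ t, v y • y := by
        rw [← Finset.sum_coe_sort t (fun y => v y • y)]
        exact Fintype.sum_equiv eT.symm _ _ (fun j => rfl)
      have hl1 : ∑ i, lam i = 1 := by rw [hsum_lam w] at *; exact hw1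
      have hm1 : ∑ j, mu j = 1 := by rw [hsum_mu v] at *; exact hv1
      obtain ⟨nu, hnu0, hrow, hcol, hcard⟩ := exists_coupling p q lam mu
        (fun i => hw0 _ (eS.symm i).2) (fun j => hv0 _ (eT.symm j).2) hl1 hm1
      set Supp := Finset.univ.filter (fun ij : Fin p × Fin q => nu ij.1 ij.2 ≠ 0) with hSupp
      set W : Finset (E × F) := Supp.image (fun ij => (u ij.1, z ij.2)) with hW
      have hWsub : W ⊆ s ×ˢ t := by
        intro xy hxy
        rw [hW, Finset.mem_image] at hxy
        obtain ⟨ij, _, rfl⟩ := hxy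
        exact Finset.mem_product.2 ⟨(eS.symm ij.1).2, (eT.symm ij.2).2⟩
      have hsum_nu : ∑ ij : Fin p × Fin q, nu ij.1 ij.2 = 1 := by
        rw [Fintype.sum_prod_type]
        simp_rw [hrow]
        exact hl1
      have hxy_sum : ∑ ij : Fin p × Fin q, nu ij.1 ij.2 • (u ij.1, z ij.2) = ((x, y) : E × F) := by
        refine Prod.ext ?_ ?_
        · rw [Prod.fst_sum]
          simp only [Prod.smul_mk]
          rw [Fintype.sum_prod_type]
          have : ∀ i : Fin p, ∑ j : Fin q, nu i j • u i = lam i • u i := by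
            intro i
            rw [← Finset.sum_smul, hrow]
          simp_rw [this]
          rw [← hwx]
          exact hsum_lamE
        · rw [Prod.snd_sum]
          simp only [Prod.smul_mk]
          rw [Fintype.sum_prod_type_right]
          have : ∀ j : Fin q, ∑ i : Fin p, nu i j • z j = mu j • z j := by
            intro j
            rw [← Finset.sum_smul, hcol]
          simp_rw [this]
          rw [← hvy]
          exact hsum_muF
      have hsupp_sum : ∑ ij ∈ Supp, nu ij.1 ij.2 = 1 := by
        rw [hSupp, Finset.sum_filter_ne_zero, ← hsum_nu]
      have hmem : ((x, y) : E × F) ∈ convexHull ℝ (↑W : Set (E × F)) := by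
        have hcm := Finset.centerMass_mem_convexHull (s := (↑W : Set (E × F))) Supp
          (w := fun ij => nu ij.1 ij.2) (fun ij _ => hnu0 _ _)
          (by rw [hsupp_sum]; norm_num)
          (z := fun ij => (u ij.1, z ij.2))
          (fun ij hij => by
            show _ ∈ (↑W : Set (E × F))
            exact Finset.mem_coe.2 (Finset.mem_image_of_mem _ hij))
        have : Supp.centerMass (fun ij => nu ij.1 ij.2) (fun ij => (u ij.1, z ij.2)) = (x, y) := by
          rw [Finset.centerMass_eq_of_sum_1 _ _ hsupp_sum, ← hxy_sum]
          refine Finset.sum_subset (Finset.filter_subset _ _) ?_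
          intro ij _ hij
          rw [hSupp, Finset.mem_filter] at hij
          push_neg at hij
          rw [hij (Finset.mem_univ _), zero_smul]
        rwa [this] at hcm
      rw [Set.mem_iUnion₂]
      refine ⟨W, ?_, hmem⟩
      rw [Finset.mem_biUnion]
      refine ⟨(s, t), Finset.mem_product.2 ⟨hs, ht⟩, ?_⟩
      rw [Finset.mem_filter, Finset.mem_powerset]
      constructor
      · exact hWsub
      · calc W.card ≤ Supp.card := Finset.card_image_le
          _ ≤ p + q - 1 := hcard
          _ ≤ a + b + 1 := by
              have h1 : p ≤ a + 1 := hpdef ▸ hScard s hs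
              have h2 : q ≤ b + 1 := hqdef ▸ hTcard t ht
              omega
    · intro xy hxy
      rw [Set.mem_iUnion₂] at hxy
      obtain ⟨W, hW, hmem⟩ := hxy
      rw [Finset.mem_biUnion] at hW
      obtain ⟨st, hst, hWst⟩ := hW
      rw [Finset.mem_filter, Finset.mem_powerset] at hWst
      rw [Finset.mem_product] at hst
      have hsub : (↑W : Set (E × F)) ⊆ (↑st.1 : Set E) ×ˢ (↑st.2 : Set F) := by
        rw [← Finset.coe_product]
        exact_mod_cast hWst.1
      have : convexHull ℝ (↑W : Set (E × F)) ⊆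
          convexHull ℝ ((↑st.1 : Set E) ×ˢ (↑st.2 : Set F)) := convexHull_mono hsub
      rw [convexHull_prod] at this
      have hxy2 := this hmem
      refine ⟨?_, ?_⟩
      · rw [Set.mem_iUnion₂]
        exact ⟨st.1, hst.1, hxy2.1⟩
      · rw [Set.mem_iUnion₂]
        exact ⟨st.2, hst.2, hxy2.2⟩

lemma IsPolyIn.image (e : E ≃ₗ[ℝ] F) {P : Set E} {n : ℕ} (h : IsPolyIn P n) :
    IsPolyIn (e '' P) n := by
  classical
  obtain ⟨S, hc, rfl⟩ := h
  refine ⟨S.image (Finset.image (⇑e)), ?_, ?_⟩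
  · intro s hs
    rw [Finset.mem_image] at hs
    obtain ⟨t, ht, rfl⟩ := hs
    exact le_trans Finset.card_image_le (hc t ht)
  · rw [Set.image_iUnion₂, Finset.set_biUnion_finset_image]
    refine Set.iUnion₂_congr fun s hs => ?_
    rw [Finset.coe_image]
    have := e.toLinearMap.image_convexHull (↑s : Set E)
    simpa using this

/-- The linear equivalence `E × (Fin m → E) ≃ (Fin (m+1) → E)` given by `Fin.cons`. -/
def consLinearEquiv (E : Type*) [AddCommGroup E] [Module ℝ E] (m : ℕ) :
    (E × (Fin m → E)) ≃ₗ[ℝ] (Fin (m + 1) → E) where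
  toFun p := Fin.cons p.1 p.2
  invFun f := (f 0, Fin.tail f)
  map_add' p q := by
    funext i
    refine Fin.cases ?_ ?_ i <;> simp
  map_smul' c p := by
    funext i
    refine Fin.cases ?_ ?_ i <;> simp
  left_inv p := by simp [Fin.tail_cons]
  right_inv f := by simp [Fin.cons_self_tail]

lemma IsPolyIn.pi {P : Set E} {Dn : ℕ} (h : IsPolyIn P Dn) :
    ∀ m : ℕ, IsPolyIn (Set.univ.pi (fun _ : Fin m => P)) (m * Dn)
  | 0 => by
    classical
    have huniv : Set.univ.pi (fun _ : Fin 0 => P) = Set.univ := by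
      ext f
      simp only [Set.mem_pi, Set.mem_univ, iff_true]
      exact fun i _ => i.elim0
    rw [huniv]
    refine ⟨{({0} : Finset (Fin 0 → E))}, ?_, ?_⟩
    · intro s hs
      rw [Finset.mem_singleton] at hs
      subst hs
      simp
    · apply Set.Subset.antisymm
      · intro f _
        rw [Set.mem_iUnion₂]
        refine ⟨{0}, Finset.mem_singleton_self _, ?_⟩
        have : f = 0 := Subsingleton.elim _ _
        rw [this]
        exact subset_convexHull ℝ _ (by simp)
      · exact Set.subset_univ _
  | (m + 1) => by
    have ih := IsPolyIn.pi h m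
    have hprod := h.prodSet ih
    have himg := hprod.image (consLinearEquiv E m)
    have hset : (consLinearEquiv E m) '' (P ×ˢ Set.univ.pi (fun _ : Fin m => P)) =
        Set.univ.pi (fun _ : Fin (m + 1) => P) := by
      ext f
      constructor
      · rintro ⟨⟨x, g⟩, ⟨hx, hg⟩, rfl⟩
        intro i _
        refine Fin.cases ?_ ?_ i
        · simpa [consLinearEquiv] using hx
        · intro j
          simpa [consLinearEquiv] using hg j (Set.mem_univ _)
      · intro hf
        refine ⟨(f 0, Fin.tail f), ⟨hf 0 (Set.mem_univ _), fun j _ => hf j.succ (Set.mem_univ _)⟩, ?_⟩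
        simp [consLinearEquiv, Fin.cons_self_tail]
    rw [hset] at himg
    have : (m + 1) * Dn = Dn + m * Dn := by ring
    rw [this]
    exact himg

end AuxPoly

lemma exists_nerve_embedding (Xb : Type*) [MetricSpace Xb] [CompactSpace Xb] (D : ℕ)
    (hdim : CovdimLE Xb D) {ε' : ℝ} (hε' : 0 < ε') :
    ∃ (N : ℕ) (P : Set (EuclideanSpace ℝ (Fin N))) (f : Xb → EuclideanSpace ℝ (Fin N)),
      IsPolyIn P D ∧ Continuous f ∧ Set.range f ⊆ P ∧
      ∀ x y, f x = f y → dist x y ≤ ε' := by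
  classical
  obtain ⟨𝒱, hVopen, hVcover, hVref, hVmult⟩ :=
    hdim {U | ∃ c : Xb, U = Metric.ball c (ε' / 2)}
      (by rintro U ⟨c, rfl⟩; exact Metric.isOpen_ball)
      (by
        apply Set.eq_univ_of_forall
        intro x
        exact Set.mem_sUnion.2 ⟨_, ⟨x, rfl⟩, Metric.mem_ball_self (by linarith)⟩)
  have hcover' : (Set.univ : Set Xb) ⊆ ⋃ V : 𝒱, (V.1 : Set Xb) := by
    intro x _
    have hx : x ∈ ⋃₀ 𝒱 := hVcover ▸ Set.mem_univ x
    obtain ⟨V, hV, hxV⟩ := hx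
    exact Set.mem_iUnion.2 ⟨⟨V, hV⟩, hxV⟩
  obtain ⟨t0, ht0⟩ := isCompact_univ.elim_finite_subcover (fun V : 𝒱 => (V.1 : Set Xb))
    (fun V => hVopen V.1 V.2) hcover'
  set t : Finset (Set Xb) := t0.image Subtype.val with htdef
  have ht𝒱 : ∀ V ∈ t, V ∈ 𝒱 := by
    intro V hV
    rw [htdef, Finset.mem_image] at hV
    obtain ⟨V0, _, rfl⟩ := hV
    exact V0.2
  have hcov : ∀ x : Xb, ∃ V ∈ t, x ∈ V := by
    intro x
    have hx := ht0 (Set.mem_univ x)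
    rw [Set.mem_iUnion₂] at hx
    obtain ⟨V, hVmem, hx⟩ := hx
    exact ⟨V.1, Finset.mem_image_of_mem _ hVmem, hx⟩
  set ι := {V : Set Xb // V ∈ t} with hι
  set ψ : ι → Xb → ℝ :=
    fun V x => if V.1ᶜ = ∅ then 1 else Metric.infDist x V.1ᶜ with hψdef
  have hψcont : ∀ V, Continuous (ψ V) := by
    intro V
    by_cases h : (V.1ᶜ = ∅)
    · simp only [hψdef, if_pos h]; exact continuous_const
    · simp only [hψdef, if_neg h]; exact Metric.continuous_infDist_pt _
  have hψnn : ∀ (V : ι) (x : Xb), 0 ≤ ψ V x := by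
    intro V x
    by_cases h : (V.1ᶜ = ∅)
    · simp only [hψdef, if_pos h]; norm_num
    · simp only [hψdef, if_neg h]; exact Metric.infDist_nonneg
  have hψmem : ∀ (V : ι) (x : Xb), ψ V x ≠ 0 → x ∈ V.1 := by
    intro V x hne
    by_cases h : (V.1ᶜ = ∅)
    · rw [Set.compl_empty_iff] at h
      rw [h]
      trivial
    · by_contra hxV
      refine hne ?_
      simp only [hψdef, if_neg h]
      exact Metric.infDist_zero_of_mem hxV
  have hψpos : ∀ (V : ι) (x : Xb), x ∈ V.1 → 0 < ψ V x := by
    intro V x hx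
    by_cases h : (V.1ᶜ = ∅)
    · simp only [hψdef, if_pos h]; norm_num
    · simp only [hψdef, if_neg h]
      refine (IsClosed.notMem_iff_infDist_pos ?_ ?_).1 ?_
      · exact (hVopen _ (ht𝒱 _ V.2)).isClosed_compl
      · exact Set.nonempty_iff_ne_empty.2 h
      · simpa using hx
  set Ψ : Xb → ℝ := fun x => ∑ V : ι, ψ V x with hΨdef
  have hΨpos : ∀ x, 0 < Ψ x := by
    intro x
    obtain ⟨V0, hV0, hx⟩ := hcov x
    exact Finset.sum_pos' (fun V _ => hψnn V x)
      ⟨⟨V0, hV0⟩, Finset.mem_univ _, hψpos ⟨V0, hV0⟩ x hx⟩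
  have hΨcont : Continuous Ψ := continuous_finset_sum _ (fun V _ => hψcont V)
  set φ : ι → Xb → ℝ := fun V x => ψ V x / Ψ x with hφdef
  have hφcont : ∀ V, Continuous (φ V) :=
    fun V => (hψcont V).div hΨcont (fun x => ne_of_gt (hΨpos x))
  have hφnn : ∀ (V : ι) (x : Xb), 0 ≤ φ V x :=
    fun V x => div_nonneg (hψnn V x) (le_of_lt (hΨpos x))
  have hφsum : ∀ x, ∑ V : ι, φ V x = 1 := by
    intro x
    rw [hφdef]
    rw [← Finset.sum_div]
    exact div_self (ne_of_gt (hΨpos x))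
  have hφmem : ∀ (V : ι) (x : Xb), φ V x ≠ 0 → x ∈ V.1 := by
    intro V x hne
    refine hψmem V x ?_
    intro h
    refine hne ?_
    rw [hφdef]
    simp [h]
  have hφpos : ∀ (V : ι) (x : Xb), x ∈ V.1 → 0 < φ V x :=
    fun V x hx => div_pos (hψpos V x hx) (hΨpos x)
  set N := Fintype.card ι with hN
  set e : ι ≃ Fin N := Fintype.equivFin ι with he
  set EE : EuclideanSpace ℝ (Fin N) ≃ₗ[ℝ] (Fin N → ℝ) :=
    WithLp.linearEquiv 2 ℝ (Fin N → ℝ) with hEE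
  set b : ι → EuclideanSpace ℝ (Fin N) := fun V => EE.symm (Pi.single (e V) 1) with hb
  set f : Xb → EuclideanSpace ℝ (Fin N) := fun x => EE.symm (fun j => φ (e.symm j) x) with hf
  have hfcont : Continuous f := by
    refine Continuous.comp ?_ (continuous_pi fun j => hφcont (e.symm j))
    exact LinearMap.continuous_of_finiteDimensional EE.symm.toLinearMap
  have hfapply : ∀ x j, EE (f x) j = φ (e.symm j) x := by
    intro x j
    simp only [hf, LinearEquiv.apply_symm_apply]
  set sx : Xb → Finset ι := fun x => Finset.univ.filter (fun V => φ V x ≠ 0) with hsx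
  have hsx_card : ∀ x, (sx x).card ≤ D + 1 := by
    intro x
    have hinj : Set.InjOn (fun V : ι => V.1) (sx x) := Subtype.coe_injective.injOn
    have hcardeq : ((sx x).image (fun V : ι => V.1)).card = (sx x).card :=
      Finset.card_image_of_injOn hinj
    rw [← hcardeq]
    refine hVmult x _ ?_ ?_
    · intro V hV
      rw [Finset.coe_image] at hV
      obtain ⟨V0, _, rfl⟩ := hV
      exact ht𝒱 _ V0.2
    · intro V hV
      rw [Finset.mem_image] at hV
      obtain ⟨V0, hV0, rfl⟩ := hV
      rw [hsx, Finset.mem_filter] at hV0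
      exact hφmem V0 x hV0.2
  have hrep : ∀ x, f x = ∑ V ∈ sx x, φ V x • b V := by
    intro x
    apply EE.injective
    rw [map_sum]
    funext j
    have hterm : ∀ V : ι, EE (φ V x • b V) j = if V = e.symm j then φ V x else 0 := by
      intro V
      rw [map_smul]
      simp only [hb, LinearEquiv.apply_symm_apply]
      rw [Pi.smul_apply, Pi.single_apply, smul_eq_mul]
      by_cases hc : V = e.symm j
      · rw [if_pos hc, if_pos (by rw [hc, Equiv.apply_symm_apply]), mul_one]
      · rw [if_neg hc, if_neg, mul_zero]
        intro hj
        exact hc ((Equiv.eq_symm_apply e).2 hj.symm)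
    simp only [Finset.sum_apply]
    simp_rw [hterm]
    rw [Finset.sum_ite_eq' (sx x) (e.symm j) (fun V => φ V x)]
    rw [hfapply]
    by_cases hmem : e.symm j ∈ sx x
    · rw [if_pos hmem]
    · rw [if_neg hmem]
      rw [hsx, Finset.mem_filter] at hmem
      push_neg at hmem
      exact hmem (Finset.mem_univ _)
  have hφsum' : ∀ x, ∑ V ∈ sx x, φ V x = 1 := by
    intro x
    rw [hsx, Finset.sum_filter_ne_zero]
    exact hφsum x
  refine ⟨N, ⋃ s ∈ ((Finset.univ.powerset.filter
      (fun s : Finset ι => s.card ≤ D + 1)).image (fun s => s.image b)),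
      convexHull ℝ (↑s : Set (EuclideanSpace ℝ (Fin N))), f, ⟨_, ?_, rfl⟩, hfcont, ?_, ?_⟩
  · intro s hs
    rw [Finset.mem_image] at hs
    obtain ⟨s0, hs0, rfl⟩ := hs
    rw [Finset.mem_filter] at hs0
    exact le_trans Finset.card_image_le hs0.2
  · rintro _ ⟨x, rfl⟩
    rw [Set.mem_iUnion₂]
    refine ⟨(sx x).image b, ?_, ?_⟩
    · exact Finset.mem_image_of_mem _ (Finset.mem_filter.2
        ⟨Finset.mem_powerset.2 (Finset.subset_univ _), hsx_card x⟩)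
    · have hcm := Finset.centerMass_mem_convexHull
        (s := (↑((sx x).image b) : Set (EuclideanSpace ℝ (Fin N)))) (sx x)
        (w := fun V => φ V x) (fun V _ => hφnn V x)
        (by rw [hφsum' x]; norm_num)
        (z := b) (fun V hV => Finset.mem_coe.2 (Finset.mem_image_of_mem _ hV))
      rwa [Finset.centerMass_eq_of_sum_1 _ _ (hφsum' x), ← hrep x] at hcm
  · intro x y hxy
    obtain ⟨V0, hV0, hx⟩ := hcov x
    have hφx : 0 < φ ⟨V0, hV0⟩ x := hφpos ⟨V0, hV0⟩ x hx
    have hφeq : φ ⟨V0, hV0⟩ y = φ ⟨V0, hV0⟩ x := by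
      have h1 := hfapply x (e ⟨V0, hV0⟩)
      have h2 := hfapply y (e ⟨V0, hV0⟩)
      rw [hxy] at h1
      rw [Equiv.symm_apply_apply] at h1 h2
      rw [← h1, ← h2]
    have hy : y ∈ V0 := hφmem ⟨V0, hV0⟩ y (by rw [hφeq]; exact ne_of_gt hφx)
    obtain ⟨U, hU, hVU⟩ := hVref V0 (ht𝒱 V0 hV0)
    obtain ⟨c, rfl⟩ := hU
    have hxc : dist x c < ε' / 2 := Metric.mem_ball.1 (hVU hx)
    have hyc : dist y c < ε' / 2 := Metric.mem_ball.1 (hVU hy)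
    calc dist x y ≤ dist x c + dist c y := dist_triangle x c y
      _ = dist x c + dist y c := by rw [dist_comm c y]
      _ ≤ ε' := by linarith

noncomputable section AuxDyn

lemma summable_weight (k : ℕ) :
    Summable (fun a : Fin k → ℤ => ((2 : ℝ) ^ (∑ i, (a i).natAbs))⁻¹) := by
  induction k with
  | zero => exact Summable.of_finite
  | succ k ih =>
    have hgeo : Summable (fun n : ℕ => ((2 : ℝ) ^ n)⁻¹) := by
      have := summable_geometric_of_lt_one (r := (2 : ℝ)⁻¹) (by norm_num) (by norm_num)
      simpa [inv_pow] using this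
    have hz : Summable (fun t : ℤ => ((2 : ℝ) ^ t.natAbs)⁻¹) := by
      refine Summable.of_nat_of_neg ?_ ?_
      · simpa using hgeo
      · simpa using hgeo
    have hpos1 : (0 : ℤ → ℝ) ≤ (fun t : ℤ => ((2 : ℝ) ^ t.natAbs)⁻¹) :=
      fun t => by positivity
    have hpos2 : (0 : (Fin k → ℤ) → ℝ) ≤
        (fun a : Fin k → ℤ => ((2 : ℝ) ^ (∑ i, (a i).natAbs))⁻¹) :=
      fun a => by positivity
    have hprod := Summable.mul_of_nonneg (f := fun t : ℤ => ((2 : ℝ) ^ t.natAbs)⁻¹)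
      (g := fun a : Fin k → ℤ => ((2 : ℝ) ^ (∑ i, (a i).natAbs))⁻¹) hz ih hpos1 hpos2
    have hcomp := (Equiv.summable_iff ((Fin.consEquiv (fun _ : Fin (k + 1) => ℤ)).symm)
      (f := fun z : ℤ × (Fin k → ℤ) =>
        ((2 : ℝ) ^ z.1.natAbs)⁻¹ * ((2 : ℝ) ^ (∑ i, (z.2 i).natAbs))⁻¹)).2 (by exact hprod)
    refine hcomp.congr ?_
    intro a
    show ((2 : ℝ) ^ (((Fin.consEquiv (fun _ : Fin (k + 1) => ℤ)).symm) a).1.natAbs)⁻¹ *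
        ((2 : ℝ) ^ (∑ i, ((((Fin.consEquiv (fun _ : Fin (k + 1) => ℤ)).symm) a).2 i).natAbs))⁻¹ = _
    have h0 : (((Fin.consEquiv (fun _ : Fin (k + 1) => ℤ)).symm) a).1 = a 0 := rfl
    have h2 : (((Fin.consEquiv (fun _ : Fin (k + 1) => ℤ)).symm) a).2 = fun i : Fin k => a i.succ := rfl
    rw [h0, h2, ← mul_inv, ← pow_add, Fin.sum_univ_succ]

lemma widimLE_shift (k : ℕ) (Xb : Type*) [MetricSpace Xb] [CompactSpace Xb] (D : ℕ)
    (hdim : CovdimLE Xb D) {ε : ℝ} (hε : 0 < ε) :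
    ∃ R : ℕ, ∀ n : ℕ, WidimLE ((Fin k → ℤ) → Xb)
      (dBoxZ k shiftZ prodDist n) ε ((n + 2 * R) ^ k * D) := by
  classical
  set w : (Fin k → ℤ) → ℝ := fun a => ((2 : ℝ) ^ (∑ i, (a i).natAbs))⁻¹ with hwdef
  have hw0 : ∀ a, 0 ≤ w a := fun a => by rw [hwdef]; positivity
  have hw1 : Summable w := summable_weight k
  set C : ℝ := ∑' a, w a with hCdef
  have hC0 : 0 ≤ C := tsum_nonneg hw0
  set MM : ℝ := Metric.diam (Set.univ : Set Xb) with hMMdef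
  have hM : ∀ x y : Xb, dist x y ≤ MM :=
    fun x y => Metric.dist_le_diam_of_mem (isCompact_univ.isBounded)
      (Set.mem_univ x) (Set.mem_univ y)
  have hM0 : 0 ≤ MM := Metric.diam_nonneg
  have hδpos : 0 < ε / (2 * (MM + 1)) := by positivity
  obtain ⟨s₀, hs₀⟩ :=
    ((tendsto_order.1 (tendsto_tsum_compl_atTop_zero w)).2 _ hδpos).exists
  set R : ℕ := s₀.sup (fun a => Finset.univ.sup (fun i => (a i).natAbs)) with hRdef
  have hRbound : ∀ a ∈ s₀, ∀ i, (a i).natAbs ≤ R := by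
    intro a ha i
    exact le_trans (Finset.le_sup (f := fun i => (a i).natAbs) (Finset.mem_univ i))
      (Finset.le_sup (f := fun a => Finset.univ.sup (fun i => (a i).natAbs)) ha)
  clear_value R
  have hε' : 0 < ε / (2 * (C + 1)) := by positivity
  obtain ⟨N, P₀, f, hP₀, hfc, hfr, hsep⟩ := exists_nerve_embedding Xb D hdim hε'
  refine ⟨R, fun n => ?_⟩
  set B : Finset (Fin k → ℤ) :=
    Fintype.piFinset (fun _ : Fin k => Finset.Icc (-(R : ℤ)) ((n : ℤ) + R - 1)) with hBdef
  set m : ℕ := B.card with hmdef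
  have hm : m = (n + 2 * R) ^ k := by
    rw [hmdef, hBdef, Fintype.card_piFinset]
    have hIcc : (Finset.Icc (-(R : ℤ)) ((n : ℤ) + R - 1)).card = n + 2 * R := by
      rw [Int.card_Icc]
      have : ((n : ℤ) + R - 1 + 1 - -(R : ℤ)) = ((n + 2 * R : ℕ) : ℤ) := by push_cast; ring
      rw [this, Int.toNat_natCast]
    simp [hIcc]
  set eB : Fin m ≃ {a // a ∈ B} := B.equivFin.symm with heBdef
  set L1 : (Fin m → EuclideanSpace ℝ (Fin N)) ≃ₗ[ℝ] (Fin m → (Fin N → ℝ)) :=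
    LinearEquiv.piCongrRight (fun _ => WithLp.linearEquiv 2 ℝ (Fin N → ℝ)) with hL1
  set L2 : (Fin m → (Fin N → ℝ)) ≃ₗ[ℝ] (Fin m × Fin N → ℝ) :=
    (LinearEquiv.curry ℝ ℝ (Fin m) (Fin N)).symm with hL2
  set L3 : (Fin m × Fin N → ℝ) ≃ₗ[ℝ] (Fin (m * N) → ℝ) :=
    LinearEquiv.funCongrLeft ℝ ℝ finProdFinEquiv.symm with hL3
  set L4 : (Fin (m * N) → ℝ) ≃ₗ[ℝ] EuclideanSpace ℝ (Fin (m * N)) :=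
    (WithLp.linearEquiv 2 ℝ (Fin (m * N) → ℝ)).symm with hL4
  set LL : (Fin m → EuclideanSpace ℝ (Fin N)) ≃ₗ[ℝ] EuclideanSpace ℝ (Fin (m * N)) :=
    L1.trans (L2.trans (L3.trans L4)) with hLL
  have hPoly : IsPolyIn ((⇑LL) '' (Set.univ.pi fun _ : Fin m => P₀)) ((n + 2 * R) ^ k * D) := by
    rw [← hm]
    exact (hP₀.pi m).image LL
  refine ⟨m * N, (⇑LL) '' (Set.univ.pi fun _ : Fin m => P₀),
    fun x => LL (fun i => f (x (eB i).1)), hPoly, ?_, ?_, ?_⟩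
  · refine Continuous.comp ?_ (continuous_pi fun i => hfc.comp (continuous_apply _))
    exact LinearMap.continuous_of_finiteDimensional LL.toLinearMap
  · rintro _ ⟨x, rfl⟩
    exact ⟨fun i => f (x (eB i).1), fun i _ => hfr (Set.mem_range_self _), rfl⟩
  · intro x y hxy
    have hg : ∀ i : Fin m, f (x (eB i).1) = f (y (eB i).1) :=
      fun i => congrFun (LL.injective hxy) i
    have hB : ∀ a ∈ B, dist (x a) (y a) ≤ ε / (2 * (C + 1)) := by
      intro a ha
      have h := hg (eB.symm ⟨a, ha⟩)
      rw [Equiv.apply_symm_apply] at h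
      exact hsep _ _ h
    refine Real.sSup_le ?_ (le_of_lt hε)
    rintro r ⟨γ, hγ, rfl⟩
    set B2 : Finset (Fin k → ℤ) :=
      Fintype.piFinset (fun _ : Fin k => Finset.Icc (-(R : ℤ)) (R : ℤ)) with hB2def
    have hB2B : ∀ a ∈ B2, γ + a ∈ B := by
      intro a ha
      have ha' : ∀ i, a i ∈ Finset.Icc (-(R : ℤ)) (R : ℤ) := Fintype.mem_piFinset.1 ha
      apply Fintype.mem_piFinset.2
      intro i
      apply Finset.mem_Icc.2
      have h1 := Finset.mem_Icc.1 (ha' i)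
      have h2 := hγ i
      rw [Pi.add_apply]
      clear * - h1 h2
      omega
    have hs₀B2 : s₀ ⊆ B2 := by
      intro a ha
      apply Fintype.mem_piFinset.2
      intro i
      apply Finset.mem_Icc.2
      have h6 := hRbound a ha i
      clear * - h6
      omega
    have hsum : Summable (fun a : Fin k → ℤ => w a * dist (x (γ + a)) (y (γ + a))) :=
      Summable.of_nonneg_of_le (fun a => mul_nonneg (hw0 a) dist_nonneg)
        (fun a => mul_le_mul_of_nonneg_left (hM _ _) (hw0 a)) (hw1.mul_right MM)
    have hpd : prodDist (shiftZ γ x) (shiftZ γ y)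
        = ∑' a, w a * dist (x (γ + a)) (y (γ + a)) := rfl
    rw [hpd, ← Summable.sum_add_tsum_compl (s := B2) hsum]
    have hpart1 : ∑ a ∈ B2, w a * dist (x (γ + a)) (y (γ + a)) ≤ ε / 2 := by
      calc ∑ a ∈ B2, w a * dist (x (γ + a)) (y (γ + a))
          ≤ ∑ a ∈ B2, w a * (ε / (2 * (C + 1))) :=
            Finset.sum_le_sum fun a ha =>
              mul_le_mul_of_nonneg_left (hB _ (hB2B a ha)) (hw0 a)
        _ = (∑ a ∈ B2, w a) * (ε / (2 * (C + 1))) := by rw [Finset.sum_mul]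
        _ ≤ C * (ε / (2 * (C + 1))) :=
            mul_le_mul_of_nonneg_right (Summable.sum_le_tsum B2 (fun a _ => hw0 a) hw1)
              (le_of_lt hε')
        _ ≤ (C + 1) * (ε / (2 * (C + 1))) :=
            mul_le_mul_of_nonneg_right (by linarith) (le_of_lt hε')
        _ = ε / 2 := by
            have : C + 1 ≠ 0 := by linarith
            field_simp
    have hpart2 : ∑' (a : ↑(↑B2 : Set (Fin k → ℤ))ᶜ),
        w a.1 * dist (x (γ + a.1)) (y (γ + a.1)) ≤ ε / 2 := by
      have hle : ∑' (a : ↑(↑B2 : Set (Fin k → ℤ))ᶜ),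
          w a.1 * dist (x (γ + a.1)) (y (γ + a.1))
          ≤ ∑' (a : ↑(↑B2 : Set (Fin k → ℤ))ᶜ), w a.1 * MM := by
        refine Summable.tsum_le_tsum ?_ (hsum.subtype _) ((hw1.mul_right MM).subtype _)
        intro a
        exact mul_le_mul_of_nonneg_left (hM _ _) (hw0 _)
      rw [tsum_mul_right] at hle
      have htail : (∑' (a : ↑(↑B2 : Set (Fin k → ℤ))ᶜ), w a.1) ≤ ε / (2 * (MM + 1)) := by
        have h1 := Summable.sum_add_tsum_compl (s := B2) hw1
        have h2 := Summable.sum_add_tsum_compl (s := s₀) hw1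
        have h3 : ∑ a ∈ s₀, w a ≤ ∑ a ∈ B2, w a :=
          Finset.sum_le_sum_of_subset_of_nonneg hs₀B2 (fun a _ _ => hw0 a)
        have h4 : (∑' (a : ↑(↑s₀ : Set (Fin k → ℤ))ᶜ), w a.1) < ε / (2 * (MM + 1)) := hs₀
        linarith
      calc ∑' (a : ↑(↑B2 : Set (Fin k → ℤ))ᶜ),
          w a.1 * dist (x (γ + a.1)) (y (γ + a.1))
          ≤ (∑' (a : ↑(↑B2 : Set (Fin k → ℤ))ᶜ), w a.1) * MM := hle
        _ ≤ (ε / (2 * (MM + 1))) * MM := mul_le_mul_of_nonneg_right htail hM0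
        _ ≤ (ε / (2 * (MM + 1))) * (MM + 1) :=
            mul_le_mul_of_nonneg_left (by linarith) (le_of_lt hδpos)
        _ = ε / 2 := by
            have : MM + 1 ≠ 0 := by linarith
            field_simp
    linarith

end AuxDyn

/-- Example 4.4 (first part): for a compact metric space `X̄` of finite covering
dimension, the shift on `X = X̄^{ℤ^k}` with the product distance has mean dimension
`dim(X : ℤ^k) ≤ dim X̄`. -/
theorem mdim_shift_le_covdim (k : ℕ) (Xb : Type*) [MetricSpace Xb] [CompactSpace Xb]
    (D : ℕ) (hdim : CovdimLE Xb D) :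
    mdimZ k (shiftZ (k := k) (Xb := Xb)) prodDist ≤ (D : ENNReal) := by
  classical
  refine iSup₂_le fun ε hε => ?_
  obtain ⟨R, hR⟩ := widimLE_shift k Xb D hdim hε
  have hWle : ∀ n : ℕ,
      Widim ((Fin k → ℤ) → Xb) (dBoxZ k shiftZ prodDist n) ε ≤ (n + 2 * R) ^ k * D :=
    fun n => Nat.sInf_le (hR n)
  have hmono : ∀ᶠ n : ℕ in atTop,
      (Widim ((Fin k → ℤ) → Xb) (dBoxZ k shiftZ prodDist n) ε : ENNReal) / (n : ENNReal) ^ k ≤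
      (((n + 2 * R) ^ k * D : ℕ) : ENNReal) / (n : ENNReal) ^ k :=
    Eventually.of_forall fun n =>
      ENNReal.div_le_div_right (by exact_mod_cast hWle n) _
  refine le_trans (Filter.limsup_le_limsup hmono) ?_
  have heq : ∀ᶠ n : ℕ in atTop,
      (((n + 2 * R) ^ k * D : ℕ) : ENNReal) / (n : ENNReal) ^ k
        = ENNReal.ofReal ((((n : ℝ) + 2 * R) ^ k * D) / (n : ℝ) ^ k) := by
    filter_upwards [eventually_ge_atTop 1] with n hn
    have hn0 : (0 : ℝ) < (n : ℝ) := by exact_mod_cast hn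
    have hnpos : (0 : ℝ) < (n : ℝ) ^ k := pow_pos hn0 k
    rw [ENNReal.ofReal_div_of_pos hnpos]
    congr 1
    · rw [← ENNReal.ofReal_natCast (((n + 2 * R) ^ k * D : ℕ))]
      congr 1
      push_cast
      ring
    · rw [ENNReal.ofReal_pow (le_of_lt hn0), ENNReal.ofReal_natCast]
  rw [Filter.limsup_congr heq]
  have h1 : Tendsto (fun n : ℕ => (1 + 2 * (R : ℝ) / n) ^ k * D) atTop
      (nhds (((1 : ℝ) + 0) ^ k * D)) :=
    Tendsto.mul_const _ (Tendsto.pow (tendsto_const_nhds.add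
      (tendsto_const_div_atTop_nhds_zero_nat (2 * (R : ℝ)))) k)
  rw [add_zero, one_pow, one_mul] at h1
  have h2 : Tendsto (fun n : ℕ => (((n : ℝ) + 2 * R) ^ k * D) / (n : ℝ) ^ k) atTop
      (nhds (D : ℝ)) := by
    refine Tendsto.congr' ?_ h1
    filter_upwards [eventually_ge_atTop 1] with n hn
    have hn0 : (n : ℝ) ≠ 0 := by
      have : (0 : ℝ) < (n : ℝ) := by exact_mod_cast hn
      linarith
    rw [show (1 + 2 * (R : ℝ) / n) = ((n : ℝ) + 2 * R) / n by field_simp, div_pow]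
    field_simp
  have h3 : Tendsto (fun n : ℕ => ENNReal.ofReal ((((n : ℝ) + 2 * R) ^ k * D) / (n : ℝ) ^ k))
      atTop (nhds (ENNReal.ofReal (D : ℝ))) := ENNReal.tendsto_ofReal h2
  rw [h3.limsup_eq, ENNReal.ofReal_natCast]
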